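/- Let η > 0 and set R_η(z) = z/(1 + η z^{2/3}) for z > 0, extended by R_η(z) = z for z ≤ 0. Consider differentiable x, y : (−∞,0] → ℝ satisfying x'(s) = y(s) − x(s) and y'(s) = 2 y(s) − e^{2s} R_η(e^{−2s} y(s)) x(s) for all s ≤ 0, with x(s) > 0 and y(s) > 0 for all s ≤ 0 and with e^{−2s} y(s) → P and e^{−2s} x(s) → P/3 as s → −∞ for some P > 0. Then: (i) x(0) ≤ P/3 (i.e. the mass M = 4π x(0) satisfies M ≤ (4π/3)‖ρ‖_∞); and (ii) for every m₀ > 0 there exists P₀ > 0, depending only on η and m₀, such that every such solution with x(0) ≤ m₀ satisfies P ≤ P₀. In particular, along any family of such solutions, P → ∞ if and only if x(0) → ∞. -/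

import Mathlib

open Real Filter Set

/-- The simplified Fermi–Dirac nonlinearity `R_η(z) = z/(1 + η z^{2/3})` for
`z > 0`, extended by `R_η(z) = z` for `z ≤ 0`. -/
noncomputable def Rfun (η z : ℝ) : ℝ :=
  if 0 < z then z / (1 + η * z ^ ((2 : ℝ) / 3)) else z

/-- A positive trajectory of the simplified Fermi–Dirac system with parameter
`η` on `(−∞,0]`, with central density `P`: `x' = y − x`,
`y' = 2y − e^{2s} R_η(e^{−2s} y) x`, `x, y > 0`, `e^{−2s} y(s) → P` and
`e^{−2s} x(s) → P/3` as `s → −∞`. -/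
noncomputable def SFDTraj (η P : ℝ) (x y : ℝ → ℝ) : Prop :=
  (∀ s ≤ (0 : ℝ), HasDerivWithinAt x (y s - x s) (Set.Iic 0) s) ∧
  (∀ s ≤ (0 : ℝ), HasDerivWithinAt y
    (2 * y s - Real.exp (2 * s) * Rfun η (Real.exp (-2 * s) * y s) * x s)
    (Set.Iic 0) s) ∧
  (∀ s ≤ (0 : ℝ), 0 < x s ∧ 0 < y s) ∧
  Filter.Tendsto (fun s => Real.exp (-2 * s) * y s) Filter.atBot (nhds P) ∧
  Filter.Tendsto (fun s => Real.exp (-2 * s) * x s) Filter.atBot (nhds (P / 3))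

lemma expMul_hasDerivAt (a s : ℝ) :
    HasDerivAt (fun t => Real.exp (a * t)) (a * Real.exp (a * s)) s := by
  simpa [mul_comm] using ((hasDerivAt_id s).const_mul a).exp

lemma tendsto_expMul (a : ℝ) (ha : 0 < a) :
    Tendsto (fun s : ℝ => Real.exp (a * s)) atBot (nhds 0) := by
  apply Real.tendsto_exp_atBot.comp
  apply tendsto_atBot_atBot.2
  intro b
  refine ⟨b / a, fun x hx => ?_⟩
  calc a * x ≤ a * (b / a) := mul_le_mul_of_nonneg_left hx ha.le
    _ = b := by field_simp

lemma mono_Iic {b : ℝ} {f f' : ℝ → ℝ}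
    (hf : ∀ s ∈ Iic b, HasDerivWithinAt f (f' s) (Iic b) s)
    (h0 : ∀ s ∈ Iic b, 0 ≤ f' s) : MonotoneOn f (Iic b) := by
  apply monotoneOn_of_hasDerivWithinAt_nonneg (convex_Iic b)
    (fun s hs => (hf s hs).continuousWithinAt)
    (fun s hs => (hf s (interior_subset hs)).mono interior_subset)
    (fun s hs => h0 s (interior_subset hs))

lemma limit_le {f : ℝ → ℝ} {b L : ℝ} (hm : MonotoneOn f (Iic b))
    (hl : Tendsto f atBot (nhds L)) {s : ℝ} (hs : s ≤ b) : L ≤ f s :=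
  le_of_tendsto hl ((eventually_le_atBot s).mono fun _ ht =>
    hm (mem_Iic.mpr (ht.trans hs)) (mem_Iic.mpr hs) ht)

lemma Rfun_pos {η z : ℝ} (hη : 0 < η) (hz : 0 < z) : 0 < Rfun η z := by
  rw [Rfun, if_pos hz]
  positivity

lemma Rfun_le {η z P : ℝ} (hη : 0 < η) (hz : 0 < z) (hP : 0 < P) (hzP : z ≤ P) :
    Rfun η z ≤ P ^ ((1:ℝ)/3) / η := by
  rw [Rfun, if_pos hz]
  rw [div_le_div_iff₀ (by positivity) hη]
  have h1 : z = z ^ ((1:ℝ)/3) * z ^ ((2:ℝ)/3) := by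
    rw [← Real.rpow_add hz]; norm_num
  have h2 : z ^ ((1:ℝ)/3) ≤ P ^ ((1:ℝ)/3) :=
    Real.rpow_le_rpow hz.le hzP (by norm_num)
  have h3 : (0:ℝ) ≤ z ^ ((2:ℝ)/3) := Real.rpow_nonneg hz.le _
  have h4 : (0:ℝ) ≤ P ^ ((1:ℝ)/3) := Real.rpow_nonneg hP.le _
  calc z * η = η * (z ^ ((1:ℝ)/3) * z ^ ((2:ℝ)/3)) := by rw [← h1]; ring
    _ ≤ η * (P ^ ((1:ℝ)/3) * z ^ ((2:ℝ)/3)) := by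
        apply mul_le_mul_of_nonneg_left (mul_le_mul_of_nonneg_right h2 h3) hη.le
    _ ≤ P ^ ((1:ℝ)/3) * (1 + η * z ^ ((2:ℝ)/3)) := by nlinarith

lemma traj_bounds (η : ℝ) (hη : 0 < η) (x y : ℝ → ℝ) (P : ℝ) (hP : 0 < P)
    (h : SFDTraj η P x y) :
    (∀ s ≤ (0:ℝ), Real.exp (-2*s) * y s ≤ P) ∧
    (∀ s ≤ (0:ℝ), x s ≤ P/3 * Real.exp (2*s)) ∧
    MonotoneOn (fun s => Real.exp s * x s) (Iic 0) ∧
    (∀ s ∈ Iic (0:ℝ), HasDerivWithinAt (fun s => Real.exp s * x s)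
      (Real.exp (3*s) * (Real.exp (-2*s) * y s)) (Iic 0) s) ∧
    (∀ s ≤ (0:ℝ), P - P ^ ((4:ℝ)/3) / (6*η) * Real.exp (2*s) ≤ Real.exp (-2*s) * y s) := by
  obtain ⟨hx, hy, hpos, hvlim, hxlim⟩ := h
  set v : ℝ → ℝ := fun s => Real.exp (-2*s) * y s with hvdef
  set g : ℝ → ℝ := fun s => Real.exp s * x s with hgdef
  have hv0 : ∀ s ≤ (0:ℝ), 0 < v s := fun s hs =>
    mul_pos (Real.exp_pos _) (hpos s hs).2
  -- derivative of v
  have hv' : ∀ s ∈ Iic (0:ℝ), HasDerivWithinAt v (-(Rfun η (v s) * x s)) (Iic 0) s := by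
    intro s hs
    have h1 := ((expMul_hasDerivAt (-2) s).hasDerivWithinAt).mul (hy s hs)
    have he : Real.exp (-2*s) * Real.exp (2*s) = 1 := by
      rw [← Real.exp_add]; norm_num
    refine h1.congr_deriv ?_
    linear_combination (-(Rfun η (Real.exp (-2*s) * y s) * x s)) * he
  -- v ≤ P
  have hvP : ∀ s ≤ (0:ℝ), v s ≤ P := by
    intro s hs
    have hm : MonotoneOn (fun s => -v s) (Iic 0) := by
      apply mono_Iic (f' := fun s => Rfun η (v s) * x s)
      · intro t ht
        have := (hv' t ht).neg; rw [neg_neg] at this; exact this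
      · intro t ht
        exact le_of_lt (mul_pos (Rfun_pos hη (hv0 t ht)) (hpos t ht).1)
    have hl : Tendsto (fun s => -v s) atBot (nhds (-P)) := hvlim.neg
    have := limit_le hm hl hs
    linarith
  -- derivative of g
  have hg' : ∀ s ∈ Iic (0:ℝ), HasDerivWithinAt g (Real.exp (3*s) * v s) (Iic 0) s := by
    intro s hs
    have h1 := (Real.hasDerivAt_exp s).hasDerivWithinAt.mul (hx s hs)
    have he : Real.exp (3*s) * Real.exp (-2*s) = Real.exp s := by
      rw [← Real.exp_add]; congr 1; ring
    refine h1.congr_deriv ?_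
    simp only [hvdef]
    linear_combination (-(y s)) * he
  have hgmono : MonotoneOn g (Iic 0) :=
    mono_Iic hg' fun s hs => le_of_lt (mul_pos (Real.exp_pos _) (hv0 s hs))
  -- limit of g
  have hglim : Tendsto g atBot (nhds 0) := by
    have heq : g = fun s => Real.exp (3*s) * (Real.exp (-2*s) * x s) := by
      funext s
      have he : Real.exp (3*s) * Real.exp (-2*s) = Real.exp s := by
        rw [← Real.exp_add]; congr 1; ring
      simp only [hgdef]
      rw [← mul_assoc, he]
    rw [heq]
    simpa using (tendsto_expMul 3 (by norm_num)).mul hxlim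
  -- x ≤ P/3 e^{2s}
  have hxle : ∀ s ≤ (0:ℝ), x s ≤ P/3 * Real.exp (2*s) := by
    intro s hs
    set G : ℝ → ℝ := fun s => P/3 * Real.exp (3*s) - g s with hGdef
    have hG' : ∀ t ∈ Iic (0:ℝ), HasDerivWithinAt G
        (P * Real.exp (3*t) - Real.exp (3*t) * v t) (Iic 0) t := by
      intro t ht
      have h1 := (((expMul_hasDerivAt 3 t).hasDerivWithinAt).const_mul (P/3)).sub (hg' t ht)
      refine h1.congr_deriv ?_; ring
    have hGmono : MonotoneOn G (Iic 0) := by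
      apply mono_Iic hG'
      intro t ht
      have := hvP t ht
      nlinarith [Real.exp_pos (3*t)]
    have hGlim : Tendsto G atBot (nhds 0) := by
      have := ((tendsto_expMul 3 (by norm_num)).const_mul (P/3)).sub hglim
      simpa using this
    have h0 := limit_le hGmono hGlim hs
    have he : Real.exp (3*s) = Real.exp s * Real.exp (2*s) := by
      rw [← Real.exp_add]; congr 1; ring
    simp only [hGdef, hgdef] at h0
    rw [he] at h0
    have h2 : Real.exp s * x s ≤ Real.exp s * (P/3 * Real.exp (2*s)) := by nlinarith
    exact le_of_mul_le_mul_left h2 (Real.exp_pos s)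
  refine ⟨hvP, hxle, hgmono, hg', ?_⟩
  -- lower bound for v
  intro s hs
  set c : ℝ := P ^ ((4:ℝ)/3) / (6*η) with hcdef
  have hc0 : 0 ≤ c := by positivity
  set ψ : ℝ → ℝ := fun s => v s + c * Real.exp (2*s) with hψdef
  have hP43 : P ^ ((1:ℝ)/3) * P = P ^ ((4:ℝ)/3) := by
    rw [show (4:ℝ)/3 = 1/3 + 1 by norm_num, Real.rpow_add hP, Real.rpow_one]
  have hψ' : ∀ t ∈ Iic (0:ℝ), HasDerivWithinAt ψ
      (-(Rfun η (v t) * x t) + c * (2 * Real.exp (2*t))) (Iic 0) t := by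
    intro t ht
    exact (hv' t ht).add (((expMul_hasDerivAt 2 t).hasDerivWithinAt).const_mul c)
  have hψmono : MonotoneOn ψ (Iic 0) := by
    apply mono_Iic hψ'
    intro t ht
    have hR := Rfun_le hη (hv0 t ht) hP (hvP t ht)
    have hxb := hxle t ht
    have hx0 := (hpos t ht).1
    have hRb : Rfun η (v t) * x t ≤ (P ^ ((1:ℝ)/3) / η) * (P/3 * Real.exp (2*t)) := by
      apply mul_le_mul hR hxb hx0.le
      positivity
    have heq : (P ^ ((1:ℝ)/3) / η) * (P/3 * Real.exp (2*t)) = c * (2 * Real.exp (2*t)) := by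
      rw [hcdef, ← hP43]; field_simp; ring
    linarith [hRb.trans_eq heq]
  have hψlim : Tendsto ψ atBot (nhds P) := by
    have := hvlim.add ((tendsto_expMul 2 (by norm_num)).const_mul c)
    simpa using this
  have := limit_le hψmono hψlim hs
  simp only [hψdef] at this
  show P - c * Real.exp (2*s) ≤ v s
  linarith


/-- for the simplified Fermi–Dirac system with `η > 0`:
(i) any trajectory satisfies `x(0) ≤ P/3` (i.e. `M ≤ (4π/3)‖ρ‖_∞`); and
(ii) for every `m₀ > 0` there is `P₀ > 0` (depending only on `η, m₀`) bounding
the central density `P` of every trajectory with `x(0) ≤ m₀`. In particular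
`P → ∞` iff `x(0) → ∞` along families of trajectories. -/
theorem mass_blowup_equivalence (η : ℝ) (hη : 0 < η) :
    (∀ (x y : ℝ → ℝ) (P : ℝ), 0 < P → SFDTraj η P x y → x 0 ≤ P / 3) ∧
    (∀ m₀ : ℝ, 0 < m₀ → ∃ P₀ : ℝ, 0 < P₀ ∧
      ∀ (x y : ℝ → ℝ) (P : ℝ), 0 < P → SFDTraj η P x y → x 0 ≤ m₀ → P ≤ P₀) := by
  constructor
  · intro x y P hP htraj
    obtain ⟨_, hxle, _, _, _⟩ := traj_bounds η hη x y P hP htraj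
    have := hxle 0 le_rfl
    simpa using this
  · intro m₀ hm₀
    refine ⟨max ((3*η)^3) (36*m₀^2/(3*η)^3), lt_of_lt_of_le (by positivity) (le_max_left _ _), ?_⟩
    intro x y P hP htraj hx0
    by_cases hcase : P ≤ (3*η)^3
    · exact hcase.trans (le_max_left _ _)
    push_neg at hcase
    refine le_trans ?_ (le_max_right _ _)
    obtain ⟨hvP, hxle, hgmono, hg', hvge⟩ := traj_bounds η hη x y P hP htraj
    obtain ⟨hx, hy, hpos, hvlim, hxlim⟩ := htraj
    set g : ℝ → ℝ := fun s => Real.exp s * x s with hgdef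
    set c : ℝ := P ^ ((4:ℝ)/3) / (6*η) with hcdef
    set z : ℝ := 3*η*P^(-((1:ℝ)/3)) with hzdef
    have hz : 0 < z := by positivity
    have h31 : 3*η < P ^ ((1:ℝ)/3) := by
      have h1 := Real.rpow_lt_rpow (by positivity) hcase (by norm_num : (0:ℝ) < 1/3)
      rwa [← Real.rpow_natCast (3*η) 3, ← Real.rpow_mul (by positivity),
        show ((3:ℕ):ℝ) * (1/3) = 1 by norm_num, Real.rpow_one] at h1
    have hzP13 : z * P ^ ((1:ℝ)/3) = 3*η := by
      rw [hzdef, mul_assoc, ← Real.rpow_add hP]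
      norm_num
    have hz1 : z < 1 := by
      have hp13 : (0:ℝ) < P ^ ((1:ℝ)/3) := by positivity
      have h2 : z * P ^ ((1:ℝ)/3) < 1 * P ^ ((1:ℝ)/3) := by
        rw [hzP13, one_mul]; exact h31
      exact lt_of_mul_lt_mul_right h2 hp13.le
    set s₁ : ℝ := Real.log z / 2 with hs₁def
    have hs₁ : s₁ ≤ 0 := by
      have := Real.log_neg hz hz1
      rw [hs₁def]; linarith
    have hes1 : Real.exp (2*s₁) = z := by
      rw [show 2*s₁ = Real.log z by rw [hs₁def]; ring]
      exact Real.exp_log hz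
    have hcz : c * z = P/2 := by
      have hpp : P ^ ((4:ℝ)/3) * P ^ (-((1:ℝ)/3)) = P := by
        rw [← Real.rpow_add hP]; norm_num
      rw [hcdef, hzdef,
        show P ^ ((4:ℝ)/3) / (6*η) * (3*η*P^(-((1:ℝ)/3)))
          = (P ^ ((4:ℝ)/3) * P ^ (-((1:ℝ)/3))) * ((3*η)/(6*η)) by ring, hpp]
      rw [show (3*η)/(6*η) = 1/2 by field_simp; ring]
      ring
    have hvhalf : ∀ s ∈ Iic s₁, P/2 ≤ Real.exp (-2*s) * y s := by
      intro s hs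
      have h1 := hvge s (le_trans (mem_Iic.mp hs) hs₁)
      have h2 : Real.exp (2*s) ≤ z := by
        rw [← hes1]; exact Real.exp_le_exp.mpr (by linarith [mem_Iic.mp hs])
      have hc0 : (0:ℝ) ≤ c := by rw [hcdef]; positivity
      have h3 : c * Real.exp (2*s) ≤ c * z := mul_le_mul_of_nonneg_left h2 hc0
      rw [hcz] at h3
      linarith
    set H : ℝ → ℝ := fun s => g s - P/2 * (Real.exp (3*s) / 3) with hHdef
    have hH' : ∀ t ∈ Iic s₁, HasDerivWithinAt H
        (Real.exp (3*t) * (Real.exp (-2*t) * y t) - P/2 * Real.exp (3*t)) (Iic s₁) t := by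
      intro t ht
      have hsub : HasDerivWithinAt (fun s => P/2 * (Real.exp (3*s)/3))
          (P/2 * (3 * Real.exp (3*t) / 3)) (Iic s₁) t :=
        ((expMul_hasDerivAt 3 t).hasDerivWithinAt.div_const 3).const_mul (P/2)
      have h1 := ((hg' t (mem_Iic.mpr (le_trans (mem_Iic.mp ht) hs₁))).mono
        (Iic_subset_Iic.mpr hs₁)).sub hsub
      refine h1.congr_deriv ?_
      ring
    have hHmono : MonotoneOn H (Iic s₁) := by
      apply mono_Iic hH'
      intro t ht
      have := hvhalf t ht
      nlinarith [Real.exp_pos (3*t)]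
    have hHlim : Tendsto H atBot (nhds 0) := by
      have hglim : Tendsto g atBot (nhds 0) := by
        have heq : g = fun s => Real.exp (3*s) * (Real.exp (-2*s) * x s) := by
          funext s
          have he : Real.exp (3*s) * Real.exp (-2*s) = Real.exp s := by
            rw [← Real.exp_add]; congr 1; ring
          show Real.exp s * x s = _
          rw [← mul_assoc, he]
        rw [heq]
        simpa using (tendsto_expMul 3 (by norm_num)).mul hxlim
      have := hglim.sub (((tendsto_expMul 3 (by norm_num)).div_const 3).const_mul (P/2))
      simpa using this
    have hHs1 : (0:ℝ) ≤ H s₁ := limit_le hHmono hHlim (le_refl s₁)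
    have hgs1 : P/6 * Real.exp (3*s₁) ≤ g s₁ := by
      have h1 : (0:ℝ) ≤ g s₁ - P/2 * (Real.exp (3*s₁)/3) := hHs1
      linarith
    have hgx0 : g s₁ ≤ x 0 := by
      have h1 := hgmono (mem_Iic.mpr hs₁) (mem_Iic.mpr le_rfl) hs₁
      simpa [hgdef] using h1
    have he3 : Real.exp (3*s₁) = (3*η) ^ ((3:ℝ)/2) * P ^ (-((1:ℝ)/2)) := by
      have h1 : Real.exp (3*s₁) = z ^ ((3:ℝ)/2) := by
        rw [Real.rpow_def_of_pos hz]
        congr 1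
        rw [hs₁def]; ring
      rw [h1, hzdef, Real.mul_rpow (by positivity) (by positivity)]
      congr 1
      rw [← Real.rpow_mul hP.le]
      norm_num
    have hPq : P * P ^ (-((1:ℝ)/2)) = P ^ ((1:ℝ)/2) := by
      nth_rewrite 1 [← Real.rpow_one P]
      rw [← Real.rpow_add hP]
      norm_num
    have hA : (0:ℝ) < (3*η) ^ ((3:ℝ)/2) := by positivity
    have hkey : (3*η) ^ ((3:ℝ)/2) / 6 * P ^ ((1:ℝ)/2) ≤ m₀ := by
      have h1 : P/6 * Real.exp (3*s₁) ≤ m₀ := le_trans hgs1 (le_trans hgx0 hx0)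
      rw [he3] at h1
      calc (3*η) ^ ((3:ℝ)/2) / 6 * P ^ ((1:ℝ)/2)
          = P/6 * ((3*η) ^ ((3:ℝ)/2) * P ^ (-((1:ℝ)/2))) := by
            rw [show P/6 * ((3*η) ^ ((3:ℝ)/2) * P ^ (-((1:ℝ)/2)))
              = (3*η) ^ ((3:ℝ)/2) / 6 * (P * P ^ (-((1:ℝ)/2))) by ring, hPq]
        _ ≤ m₀ := h1
    have hq : P ^ ((1:ℝ)/2) ≤ 6*m₀ / (3*η) ^ ((3:ℝ)/2) := by
      rw [le_div_iff₀ hA]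
      nlinarith
    have hq0 : (0:ℝ) ≤ P ^ ((1:ℝ)/2) := Real.rpow_nonneg hP.le _
    have hqsq : (P ^ ((1:ℝ)/2))^2 = P := by
      rw [← Real.rpow_natCast (P ^ ((1:ℝ)/2)) 2, ← Real.rpow_mul hP.le]
      norm_num
    have hAsq : ((3*η) ^ ((3:ℝ)/2))^2 = (3*η)^3 := by
      rw [← Real.rpow_natCast ((3*η) ^ ((3:ℝ)/2)) 2, ← Real.rpow_mul (by positivity),
        ← Real.rpow_natCast (3*η) 3]
      norm_num
    have hfin : P ≤ (6*m₀ / (3*η) ^ ((3:ℝ)/2))^2 := by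
      rw [← hqsq]
      exact pow_le_pow_left₀ hq0 hq 2
    calc P ≤ (6*m₀ / (3*η) ^ ((3:ℝ)/2))^2 := hfin
      _ = 36*m₀^2 / ((3*η) ^ ((3:ℝ)/2))^2 := by rw [div_pow]; ring_nf
      _ = 36*m₀^2/(3*η)^3 := by rw [hAsq]
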